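/- Let X = {a,b}, and let h : X* → X* be the morphism with h(a) = a^s and h(b) = a^{γ_1} b a^{α_1} b ⋯ b a^{α_{p-1}} b a^{γ_2}, where s ≥ 1, p ≥ 2 and all exponents are nonnegative. Let w = ω(h). Then for every i ≥ 1, A_w(p·i) = s·A_w(i) + γ_1 + γ_2. -/

import Mathlib

/-- Words over the binary alphabet: `false` is the letter `a`, `true` is the letter `b`. -/
abbrev Word := List Bool

/-- The morphism of the free monoid determined by the images `g` of the letters. -/
def applyG (g : Bool → Word) (w : Word) : Word := w.flatMap g

/-- `a^n`. -/
def rep (n : ℕ) : Word := List.replicate n false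

/-- `b a^{α 1} b a^{α 2} ⋯ b a^{α (p-1)} b`, a word with `p` occurrences of `b`. -/
def blockWord (p : ℕ) (α : ℕ → ℕ) : Word :=
  ((List.range (p - 1)).flatMap fun i => true :: rep (α (i + 1))) ++ [true]

/-- `w^k`. -/
def wordPow (w : Word) (k : ℕ) : Word := (List.replicate k w).flatten

/-- `u` and `v` are `a`-conjugates. -/
def AConj (u v : Word) : Prop :=
  ∃ p q r s : ℕ, ∃ w : Word,
    u = rep p ++ w ++ rep q ∧ v = rep r ++ w ++ rep s ∧ p + q = r + s

/-- `w` is the infinite word `ω(g)`: for every `n`, the word obtained from `g^n(b)` by deleting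
all occurrences of `a` preceding the first occurrence of `b` is a prefix of `w`. -/
def IsOmega (g : Bool → Word) (w : ℕ → Bool) : Prop :=
  ∀ n k : ℕ, ∀ hk : k < (((applyG g)^[n] [true]).dropWhile (fun x => !x)).length,
    (((applyG g)^[n] [true]).dropWhile (fun x => !x)).get ⟨k, hk⟩ = w k

/-- `Aw w i` (for `i ≥ 1`): the number of occurrences of `a` in `w` strictly between the
`i`-th and `(i+1)`-th occurrences of `b` in `w`. -/
noncomputable def Aw (w : ℕ → Bool) (i : ℕ) : ℕ :=
  Nat.nth (fun n => w n = true) i - Nat.nth (fun n => w n = true) (i - 1) - 1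

namespace S7

lemma rep_add (m n : ℕ) : rep (m + n) = rep m ++ rep n := by
  unfold rep; rw [List.replicate_add]

lemma dropA_rep_append (c : ℕ) (l : Word) :
    (rep c ++ l).dropWhile (fun x => !x) = l.dropWhile (fun x => !x) := by
  induction c with
  | zero => simp [rep]
  | succ c ih => simpa [rep, List.replicate_succ, List.dropWhile_cons] using ih

lemma dropA_cons_true (l : Word) :
    (true :: l).dropWhile (fun x => !x) = true :: l := by
  simp [List.dropWhile_cons]

lemma flatMap_range_congr {f g : ℕ → Word} {n : ℕ} (h : ∀ i < n, f i = g i) :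
    (List.range n).flatMap f = (List.range n).flatMap g := by
  induction n with
  | zero => simp
  | succ n ih =>
    rw [List.range_succ, List.flatMap_append, List.flatMap_append,
      ih (fun i hi => h i (by omega))]
    simp [h n (by omega)]

lemma cons_flatMap (f : ℕ → Word) (n : ℕ) :
    ((List.range n).flatMap fun i => true :: f i) ++ [true]
      = true :: (List.range n).flatMap (fun i => f i ++ [true]) := by
  induction n with
  | zero => simp
  | succ n ih =>
    rw [List.range_succ, List.flatMap_append, List.flatMap_append]
    simp only [List.flatMap_cons, List.flatMap_nil, List.append_nil]
    rw [List.append_assoc,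
      show (true :: f n) ++ [true] = [true] ++ (f n ++ [true]) from rfl,
      ← List.append_assoc, ih]
    simp

lemma blockWord_eq (p : ℕ) (α : ℕ → ℕ) :
    blockWord p α = true :: (List.range (p - 1)).flatMap (fun i => rep (α (i + 1)) ++ [true]) := by
  unfold blockWord
  exact cons_flatMap _ _

lemma applyG_append (g : Bool → Word) (u v : Word) :
    applyG g (u ++ v) = applyG g u ++ applyG g v := List.flatMap_append

lemma applyG_rep {h : Bool → Word} {s : ℕ} (ha : h false = rep s) (t : ℕ) :
    applyG h (rep t) = rep (s * t) := by
  induction t with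
  | zero => simp [rep, applyG]
  | succ t ih =>
    have : rep (t + 1) = rep t ++ rep 1 := rep_add t 1
    rw [this, applyG_append, ih, show applyG h (rep 1) = h false by simp [rep, applyG], ha,
      ← rep_add, Nat.mul_succ]

lemma applyG_flatMap (h : Bool → Word) (n : ℕ) (f : ℕ → Word) :
    applyG h ((List.range n).flatMap f) = (List.range n).flatMap (fun k => applyG h (f k)) :=
  List.flatMap_assoc ..

/-- The gap sequence of the fixed point. -/
def G (s p γ₁ γ₂ : ℕ) (α : ℕ → ℕ) : ℕ → ℕ
  | 0 => 0
  | (j+1) =>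
    if h : 2 ≤ p ∧ (j+1) % p = 0 then
      s * G s p γ₁ γ₂ α ((j+1)/p) + γ₁ + γ₂
    else α ((j+1) % p)
decreasing_by exact Nat.div_lt_self (Nat.succ_pos j) (by omega)

lemma G_mul {s p γ₁ γ₂ : ℕ} {α : ℕ → ℕ} (hp : 2 ≤ p) {i : ℕ} (hi : 1 ≤ i) :
    G s p γ₁ γ₂ α (p * i) = s * G s p γ₁ γ₂ α i + γ₁ + γ₂ := by
  have hpi : 0 < p * i := Nat.mul_pos (by omega) hi
  obtain ⟨j, hj⟩ : ∃ j, p * i = j + 1 := ⟨p * i - 1, by omega⟩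
  rw [hj, G, dif_pos ⟨hp, by rw [← hj]; exact Nat.mul_mod_right p i⟩]
  congr 2
  rw [← hj, Nat.mul_div_cancel_left _ (show 0 < p by omega)]

lemma G_alpha {s p γ₁ γ₂ : ℕ} {α : ℕ → ℕ} {j : ℕ} (hj : j % p ≠ 0) :
    G s p γ₁ γ₂ α j = α (j % p) := by
  obtain ⟨j', rfl⟩ : ∃ j', j = j' + 1 :=
    ⟨j - 1, (Nat.succ_pred_eq_of_pos (Nat.pos_of_ne_zero
      (by rintro rfl; exact hj (Nat.zero_mod p)))).symm⟩
  rw [G, dif_neg (by tauto)]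

/-- `a^{g 1} b a^{g 2} b ⋯ a^{g m} b`. -/
def Ew (g : ℕ → ℕ) (m : ℕ) : Word :=
  (List.range m).flatMap (fun k => rep (g (k + 1)) ++ [true])

/-- `b a^{g 1} b ⋯ a^{g m} b`. -/
def Xw (g : ℕ → ℕ) (m : ℕ) : Word := true :: Ew g m

/-- position of the `(j+1)`-st `b`. -/
def Bp (g : ℕ → ℕ) (j : ℕ) : ℕ := j + ∑ k ∈ Finset.range j, g (k + 1)

lemma Bp_succ (g : ℕ → ℕ) (j : ℕ) : Bp g (j + 1) = Bp g j + g (j + 1) + 1 := by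
  unfold Bp; rw [Finset.sum_range_succ]; omega

lemma Bp_mono (g : ℕ → ℕ) {m n : ℕ} (h : m ≤ n) : Bp g m ≤ Bp g n := by
  unfold Bp
  exact Nat.add_le_add h (Finset.sum_le_sum_of_subset (f := fun k => g (k + 1))
    (Finset.range_subset_range.2 h))

lemma Ew_succ (g : ℕ → ℕ) (m : ℕ) :
    Ew g (m + 1) = Ew g m ++ (rep (g (m + 1)) ++ [true]) := by
  unfold Ew; rw [List.range_succ, List.flatMap_append]; simp

lemma Ew_add (g : ℕ → ℕ) (m n : ℕ) :
    Ew g (m + n) = Ew g m ++ (List.range n).flatMap (fun k => rep (g (m + k + 1)) ++ [true]) := by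
  unfold Ew
  rw [List.range_add, List.flatMap_append, List.flatMap_map]

lemma length_Ew (g : ℕ → ℕ) (m : ℕ) : (Ew g m).length = Bp g m := by
  induction m with
  | zero => simp [Ew, Bp]
  | succ m ih =>
    rw [Ew_succ, Bp_succ]
    simp [ih, rep]
    omega

lemma length_Xw (g : ℕ → ℕ) (m : ℕ) : (Xw g m).length = Bp g m + 1 := by
  simp [Xw, length_Ew]

lemma Ew_congr {g₁ g₂ : ℕ → ℕ} {m : ℕ} (h : ∀ k < m, g₁ (k + 1) = g₂ (k + 1)) :
    Ew g₁ m = Ew g₂ m :=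
  flatMap_range_congr (fun i hi => by rw [h i hi])

section Main

variable {s p γ₁ γ₂ : ℕ} {α : ℕ → ℕ}

/-- The central combinatorial identity. -/
lemma claim (hp : 2 ≤ p) (m : ℕ) :
    Ew (G s p γ₁ γ₂ α) (p * m + (p - 1)) ++ rep γ₂
      = (Ew α (p - 1) ++ rep γ₂) ++ (List.range m).flatMap
          (fun k => rep (s * G s p γ₁ γ₂ α (k + 1) + γ₁) ++ [true] ++ Ew α (p - 1) ++ rep γ₂) := by
  induction m with
  | zero =>
    simp only [Nat.mul_zero, Nat.zero_add, List.range_zero, List.flatMap_nil, List.append_nil]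
    congr 1
    refine Ew_congr (fun k hk => ?_)
    have hlt : k + 1 < p := by omega
    have hG := G_alpha (s := s) (p := p) (γ₁ := γ₁) (γ₂ := γ₂) (α := α) (j := k + 1)
      (by rw [Nat.mod_eq_of_lt hlt]; omega)
    rwa [Nat.mod_eq_of_lt hlt] at hG
  | succ m ih =>
    have h1 : p * (m + 1) + (p - 1) = (p * m + (p - 1)) + p := by ring
    rw [h1, Ew_add]
    -- the new chunk
    have hchunk : (List.range p).flatMap
        (fun k => rep (G s p γ₁ γ₂ α (p * m + (p - 1) + k + 1)) ++ [true])
        = (rep (s * G s p γ₁ γ₂ α (m + 1) + γ₁ + γ₂) ++ [true]) ++ Ew α (p - 1) := by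
      rw [show List.range p = 0 :: List.map Nat.succ (List.range (p - 1)) by
        rw [← List.range_succ_eq_map]; congr 1; omega]
      rw [List.flatMap_cons, List.flatMap_map]
      congr 1
      · have e1 : p * m + (p - 1) + 0 + 1 = p * (m + 1) := by omega
        rw [e1, G_mul hp (by omega)]
      · apply flatMap_range_congr
        intro i hi
        simp only [Nat.succ_eq_add_one]
        have e2 : p * m + (p - 1) + (i + 1) + 1 = p * (m + 1) + (i + 1) := by omega
        rw [e2, G_alpha (by rw [Nat.mul_add_mod, Nat.mod_eq_of_lt (by omega)]; omega),
          Nat.mul_add_mod, Nat.mod_eq_of_lt (by omega)]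
    rw [hchunk, List.range_succ, List.flatMap_append,
      show s * G s p γ₁ γ₂ α (m + 1) + γ₁ + γ₂
          = γ₂ + (s * G s p γ₁ γ₂ α (m + 1) + γ₁) from by omega, rep_add]
    simp only [List.flatMap_cons, List.flatMap_nil, List.append_nil, ← List.append_assoc, ih]

lemma step (h : Bool → Word) (hp : 2 ≤ p) (ha : h false = rep s)
    (hb : h true = rep γ₁ ++ blockWord p α ++ rep γ₂) (m t : ℕ) :
    (applyG h (Xw (G s p γ₁ γ₂ α) m ++ rep t)).dropWhile (fun x => !x)
      = Xw (G s p γ₁ γ₂ α) (p * m + (p - 1)) ++ rep (s * t + γ₂) := by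
  have hEw : applyG h (Ew (G s p γ₁ γ₂ α) m)
      = (List.range m).flatMap
          (fun k => rep (s * G s p γ₁ γ₂ α (k + 1) + γ₁) ++ [true]
            ++ Ew α (p - 1) ++ rep γ₂) := by
    unfold Ew
    rw [applyG_flatMap]
    apply flatMap_range_congr
    intro i hi
    rw [applyG_append, applyG_rep ha, show applyG h [true] = h true by simp [applyG], hb,
      blockWord_eq, rep_add]
    simp [List.append_assoc]
  have hX : applyG h (Xw (G s p γ₁ γ₂ α) m ++ rep t)
      = h true ++ applyG h (Ew (G s p γ₁ γ₂ α) m) ++ applyG h (rep t) := by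
    rw [show Xw (G s p γ₁ γ₂ α) m ++ rep t
        = [true] ++ (Ew (G s p γ₁ γ₂ α) m ++ rep t) from by simp [Xw],
      applyG_append, applyG_append]
    simp [applyG]
  rw [hX, applyG_rep ha, hEw, hb, blockWord_eq]
  simp only [List.append_assoc, List.cons_append, List.nil_append]
  rw [dropA_rep_append]
  rw [dropA_cons_true, show Xw (G s p γ₁ γ₂ α) (p * m + (p - 1)) ++ rep (s * t + γ₂)
      = true :: (Ew (G s p γ₁ γ₂ α) (p * m + (p - 1)) ++ rep (s * t + γ₂)) from by simp [Xw]]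
  congr 1
  rw [show s * t + γ₂ = γ₂ + s * t from by omega, rep_add]
  conv_rhs => rw [← List.append_assoc, claim hp m]
  simp [List.append_assoc]
  rfl

lemma u_eq (h : Bool → Word) (hp : 2 ≤ p) (ha : h false = rep s)
    (hb : h true = rep γ₁ ++ blockWord p α ++ rep γ₂) (n : ℕ) :
    ∃ t : ℕ, ((applyG h)^[n] [true]).dropWhile (fun x => !x)
        = Xw (G s p γ₁ γ₂ α) (p ^ n - 1) ++ rep t := by
  induction n with
  | zero => exact ⟨0, by simp [Xw, Ew, rep, dropA_cons_true]⟩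
  | succ n ih =>
    obtain ⟨t, ht⟩ := ih
    refine ⟨s * t + γ₂, ?_⟩
    set l := (applyG h)^[n] [true] with hl
    have hsplit : l = rep ((l.takeWhile (fun x => !x)).length)
        ++ (Xw (G s p γ₁ γ₂ α) (p ^ n - 1) ++ rep t) := by
      conv_lhs => rw [← List.takeWhile_append_dropWhile (p := fun x => !x) (l := l)]
      rw [ht]
      congr 1
      have := List.eq_replicate_of_mem (l := l.takeWhile (fun x => !x)) (a := false)
        (fun b hb' => by have := List.mem_takeWhile_imp hb'; simpa using this)
      exact this
    have harith : p * (p ^ n - 1) + (p - 1) = p ^ (n + 1) - 1 := by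
      have h1 : 1 ≤ p ^ n := Nat.one_le_pow _ _ (by omega)
      have h2 : p ^ (n + 1) = p * p ^ n := by rw [pow_succ]; ring
      have h3 : p * (p ^ n - 1) = p * p ^ n - p := by rw [Nat.mul_sub]; ring_nf
      have h4 : p ≤ p * p ^ n := Nat.le_mul_of_pos_right p h1 |>.trans_eq (by ring)
      omega
    rw [Function.iterate_succ_apply', ← hl, hsplit, applyG_append, applyG_rep ha,
      dropA_rep_append, step h hp ha hb, harith]

lemma w_agree (h : Bool → Word) (w : ℕ → Bool) (hw : IsOmega h w) (hp : 2 ≤ p)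
    (ha : h false = rep s) (hb : h true = rep γ₁ ++ blockWord p α ++ rep γ₂)
    (m k : ℕ) (hk : k < (Xw (G s p γ₁ γ₂ α) m).length) :
    w k = (Xw (G s p γ₁ γ₂ α) m)[k] := by
  obtain ⟨t, ht⟩ := u_eq h hp ha hb (n := m)
  have hm : m ≤ p ^ m - 1 := by
    have := Nat.lt_pow_self (n := m) (show 1 < p by omega); omega
  obtain ⟨d, hd⟩ : ∃ d, p ^ m - 1 = m + d := ⟨p ^ m - 1 - m, by omega⟩
  have hXsplit : Xw (G s p γ₁ γ₂ α) (p ^ m - 1) = Xw (G s p γ₁ γ₂ α) m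
      ++ (List.range d).flatMap (fun k => rep (G s p γ₁ γ₂ α (m + k + 1)) ++ [true]) := by
    rw [hd]; unfold Xw; rw [Ew_add]; simp
  have hk2 : k < (Xw (G s p γ₁ γ₂ α) (p ^ m - 1)).length := by
    rw [hXsplit, List.length_append]; omega
  have hk3 : k < (((applyG h)^[m] [true]).dropWhile (fun x => !x)).length := by
    rw [ht, List.length_append]; omega
  have h1 := hw m k hk3
  rw [List.get_eq_getElem] at h1
  rw [← h1, List.getElem_of_eq ht hk3, List.getElem_append_left hk2,
    List.getElem_of_eq hXsplit hk2, List.getElem_append_left hk]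

lemma Xw_getElem_true (g : ℕ → ℕ) (j : ℕ) (hj : Bp g j < (Xw g j).length) :
    (Xw g j)[Bp g j] = true := by
  cases j with
  | zero =>
    have h0 : Bp g 0 = 0 := by simp [Bp]
    simp [Xw, Ew, h0]
  | succ j =>
    have hX : Xw g (j + 1) = (Xw g j ++ rep (g (j + 1))) ++ [true] := by
      unfold Xw; rw [Ew_succ]; simp
    have hlen : (Xw g j ++ rep (g (j + 1))).length = Bp g (j + 1) := by
      rw [List.length_append, length_Xw, Bp_succ]; simp [rep]; omega
    rw [List.getElem_of_eq hX hj]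
    exact List.getElem_concat_length hlen.symm _

lemma Xw_getElem_false (g : ℕ → ℕ) (j r : ℕ) (hr : r < g (j + 1))
    (h2 : Bp g j + 1 + r < (Xw g (j + 1)).length) :
    (Xw g (j + 1))[Bp g j + 1 + r] = false := by
  have hX : Xw g (j + 1) = Xw g j ++ (rep (g (j + 1)) ++ [true]) := by
    unfold Xw; rw [Ew_succ]; simp
  rw [List.getElem_of_eq hX h2,
    List.getElem_append_right (by rw [length_Xw]; omega)]
  simp only [length_Xw, Nat.add_sub_cancel_left]
  rw [List.getElem_append_left (by simp [rep]; omega)]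
  simp [rep]

lemma w_B_true (h : Bool → Word) (w : ℕ → Bool) (hw : IsOmega h w) (hp : 2 ≤ p)
    (ha : h false = rep s) (hb : h true = rep γ₁ ++ blockWord p α ++ rep γ₂) (j : ℕ) :
    w (Bp (G s p γ₁ γ₂ α) j) = true := by
  have hlt : Bp (G s p γ₁ γ₂ α) j < (Xw (G s p γ₁ γ₂ α) j).length := by
    rw [length_Xw]; omega
  rw [w_agree h w hw hp ha hb j _ hlt]
  exact Xw_getElem_true _ j hlt

lemma count_B (h : Bool → Word) (w : ℕ → Bool) (hw : IsOmega h w) (hp : 2 ≤ p)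
    (ha : h false = rep s) (hb : h true = rep γ₁ ++ blockWord p α ++ rep γ₂) (j : ℕ) :
    Nat.count (fun n => w n = true) (Bp (G s p γ₁ γ₂ α) j) = j := by
  induction j with
  | zero =>
    have h0 : Bp (G s p γ₁ γ₂ α) 0 = 0 := by simp [Bp]
    rw [h0]; exact Nat.count_zero _
  | succ j ih =>
    set g := G s p γ₁ γ₂ α with hg
    have key : ∀ d, d ≤ g (j + 1) →
        Nat.count (fun n => w n = true) (Bp g j + 1 + d) = j + 1 := by
      intro d
      induction d with
      | zero =>
        intro _
        rw [show Bp g j + 1 + 0 = Bp g j + 1 from rfl, Nat.count_succ, ih,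
          if_pos (w_B_true h w hw hp ha hb j)]
      | succ d ihd =>
        intro hd
        have hlen : Bp g j + 1 + d < (Xw g (j + 1)).length := by
          rw [length_Xw, Bp_succ]; omega
        have hfalse : w (Bp g j + 1 + d) = false := by
          rw [w_agree h w hw hp ha hb (j + 1) _ hlen]
          exact Xw_getElem_false g j d (by omega) hlen
        rw [show Bp g j + 1 + (d + 1) = (Bp g j + 1 + d) + 1 from rfl, Nat.count_succ,
          ihd (by omega), if_neg (by simp [hfalse])]
    have hfin := key (g (j + 1)) le_rfl
    rw [Bp_succ]
    convert hfin using 2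
    omega

lemma nth_B (h : Bool → Word) (w : ℕ → Bool) (hw : IsOmega h w) (hp : 2 ≤ p)
    (ha : h false = rep s) (hb : h true = rep γ₁ ++ blockWord p α ++ rep γ₂) (j : ℕ) :
    Nat.nth (fun n => w n = true) j = Bp (G s p γ₁ γ₂ α) j := by
  have h2 := Nat.nth_count (p := fun n => w n = true) (w_B_true h w hw hp ha hb j)
  rwa [count_B h w hw hp ha hb j] at h2

end Main
end S7

/-- for `w = ω(h)`, `A_w(p·i) = s·A_w(i) + γ₁ + γ₂` for all `i ≥ 1`. -/
theorem stmt7 (s : ℕ) (hs : 1 ≤ s) (p : ℕ) (hp : 2 ≤ p) (γ₁ γ₂ : ℕ) (α : ℕ → ℕ)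
    (h : Bool → Word)
    (ha : h false = rep s)
    (hb : h true = rep γ₁ ++ blockWord p α ++ rep γ₂)
    (w : ℕ → Bool) (hw : IsOmega h w) :
    ∀ i : ℕ, 1 ≤ i → Aw w (p * i) = s * Aw w i + γ₁ + γ₂ := by
  intro i hi
  have key : ∀ j : ℕ, 1 ≤ j → Aw w j = S7.G s p γ₁ γ₂ α j := by
    intro j hj
    obtain ⟨j', rfl⟩ : ∃ j', j = j' + 1 := ⟨j - 1, by omega⟩
    unfold Aw
    rw [S7.nth_B h w hw hp ha hb, show j' + 1 - 1 = j' from by omega,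
      S7.nth_B h w hw hp ha hb, S7.Bp_succ]
    omega
  have hpi : 1 ≤ p * i := Nat.mul_pos (by omega) hi
  rw [key (p * i) hpi, key i hi, S7.G_mul hp hi]
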